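/- Let K be a normed field (with multiplicative norm) and A a commutative Noetherian K-algebra equipped with a complete nonarchimedean ring norm satisfying ‖c•a‖ ≤ ‖c‖·‖a‖ for c ∈ K, a ∈ A, and assume that every ideal of A is closed and boundedly generated (as holds for every K-affinoid algebra). Let 𝔭 be a prime ideal of A, let (a_i)_{i∈ℕ} be a sequence in A with ‖a_i‖ → 0, and let (r_m)_{m∈ℕ} be a sequence of nonzero elements of K with ‖r_m‖ ≤ 1 and ‖r_m‖ → 0. If for every m the image of the convergent sum Σ_{i=0}^∞ r_m^i • a_i in the localization A_𝔭 is zero, then there exists a single s ∈ A ∖ 𝔭 with s·a_i = 0 for all i; equivalently, the restricted power series f(S) = Σ_i a_i S^i vanishes in A⟨S⟩ ⊗_A A_𝔭. -/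

import Mathlib

open Filter

set_option linter.unusedSectionVars false
set_option maxHeartbeats 1000000

section Aux


variable {K : Type*} [NormedField K] {A : Type*} [NormedCommRing A] [CompleteSpace A]
  [Algebra K A]

lemma nonarch_finset_sum (hna : ∀ x y : A, ‖x + y‖ ≤ max ‖x‖ ‖y‖)
    {ι : Type*} (t : Finset ι) (f : ι → A) {B : ℝ} (hB : 0 ≤ B)
    (h : ∀ i ∈ t, ‖f i‖ ≤ B) : ‖∑ i ∈ t, f i‖ ≤ B := by
  classical
  induction t using Finset.induction_on with
  | empty => simpa using hB
  | @insert a s hx ih =>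
    rw [Finset.sum_insert hx]
    exact (hna _ _).trans (max_le (h a (Finset.mem_insert_self a s))
      (ih fun i hi => h i (Finset.mem_insert_of_mem hi)))

lemma summable_aux (hsmul : ∀ (c : K) (a : A), ‖c • a‖ ≤ ‖c‖ * ‖a‖)
    (hna : ∀ x y : A, ‖x + y‖ ≤ max ‖x‖ ‖y‖)
    (b : ℕ → A) (hb : Tendsto (fun i => ‖b i‖) atTop (nhds 0))
    (r : K) (hr1 : ‖r‖ ≤ 1) : Summable (fun i => r ^ i • b i) := by
  rw [summable_iff_vanishing_norm]
  intro ε hε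
  obtain ⟨N, hN⟩ := (Metric.tendsto_atTop.1 hb (ε / 2) (by positivity))
  refine ⟨Finset.range N, fun t ht => ?_⟩
  have hle : ‖∑ i ∈ t, r ^ i • b i‖ ≤ ε / 2 := by
    refine nonarch_finset_sum hna _ _ (by positivity) fun i hi => ?_
    have hiN : N ≤ i := by
      by_contra h
      exact (Finset.disjoint_left.1 ht hi) (Finset.mem_range.2 (lt_of_not_ge h))
    have h1 := hN i hiN
    rw [Real.dist_eq, sub_zero, abs_of_nonneg (norm_nonneg _)] at h1
    calc ‖r ^ i • b i‖ ≤ ‖r ^ i‖ * ‖b i‖ := hsmul _ _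
      _ ≤ 1 * ‖b i‖ := mul_le_mul_of_nonneg_right
          (by rw [norm_pow]; exact pow_le_one₀ (norm_nonneg _) hr1) (norm_nonneg _)
      _ ≤ ε / 2 := by rw [one_mul]; exact h1.le
  linarith

lemma tsum_norm_le_aux (hna : ∀ x y : A, ‖x + y‖ ≤ max ‖x‖ ‖y‖)
    {f : ℕ → A} (hf : Summable f) {B : ℝ} (hB : 0 ≤ B)
    (h : ∀ i, ‖f i‖ ≤ B) : ‖∑' i, f i‖ ≤ B := by
  have h2 : Tendsto (fun s : Finset ℕ => ∑ i ∈ s, f i) atTop (nhds (∑' i, f i)) :=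
    hf.hasSum
  exact le_of_tendsto h2.norm (Filter.Eventually.of_forall fun s =>
    nonarch_finset_sum hna s f hB fun i _ => h i)

end Aux


/-- An ideal `I` of a normed ring is *boundedly generated* if it has finitely
many generators `b₁,…,b_k` and a constant `C > 0` such that every `x ∈ I` can
be written `x = Σ c_j b_j` with `‖c_j‖ ≤ C·‖x‖`. -/
def BoundedlyGenerated {A : Type*} [NormedCommRing A] (I : Ideal A) : Prop :=
  ∃ (k : ℕ) (b : Fin k → A) (C : ℝ), 0 < C ∧ Ideal.span (Set.range b) = I ∧
    ∀ x ∈ I, ∃ c : Fin k → A, x = ∑ j, c j * b j ∧ ∀ j, ‖c j‖ ≤ C * ‖x‖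

/-- Let `K` be a normed field and `A` a commutative Noetherian
`K`-algebra with a complete nonarchimedean ring norm satisfying
`‖c • a‖ ≤ ‖c‖·‖a‖`, in which every ideal is closed and boundedly generated (as
holds for affinoid algebras).  Let `𝔭` be a prime ideal of `A`, `(a_i)` a
sequence in `A` with `‖a_i‖ → 0`, and `(r_m)` a sequence of nonzero elements of
`K` with `‖r_m‖ ≤ 1`, `‖r_m‖ → 0`.  If for every `m` the image of the
convergent sum `Σ_i r_m^i • a_i` in the localization `A_𝔭` vanishes, then there
is a single `s ∈ A ∖ 𝔭` with `s·a_i = 0` for all `i`; equivalently the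
restricted power series `f(S) = Σ a_i S^i` vanishes in `A⟨S⟩ ⊗_A A_𝔭`. -/
theorem coeff_vanish_in_localization_of_eval_vanish {K : Type*} [NormedField K]
    {A : Type*} [NormedCommRing A] [CompleteSpace A] [Algebra K A]
    [IsNoetherianRing A]
    (hsmul : ∀ (c : K) (a : A), ‖c • a‖ ≤ ‖c‖ * ‖a‖)
    (hna : ∀ x y : A, ‖x + y‖ ≤ max ‖x‖ ‖y‖)
    (hclosed : ∀ I : Ideal A, IsClosed (I : Set A))
    (hbg : ∀ I : Ideal A, BoundedlyGenerated I)
    (𝔭 : Ideal A) [𝔭.IsPrime]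
    (a : ℕ → A) (ha : Filter.Tendsto (fun i => ‖a i‖) Filter.atTop (nhds 0))
    (r : ℕ → K) (hr0 : ∀ m, r m ≠ 0) (hr1 : ∀ m, ‖r m‖ ≤ 1)
    (hr : Filter.Tendsto (fun m => ‖r m‖) Filter.atTop (nhds 0))
    (hsum : ∀ m, algebraMap A (Localization.AtPrime 𝔭)
      (∑' i : ℕ, (r m) ^ i • a i) = 0) :
    ∃ s : A, s ∉ 𝔭 ∧ ∀ i, s * a i = 0 := by
  classical
  set φ : A →+* Localization.AtPrime 𝔭 := algebraMap A (Localization.AtPrime 𝔭) with hφ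
  -- Step A: for any sequence satisfying the hypotheses, the 0-th coefficient is in ker φ.
  have key : ∀ b : ℕ → A, Tendsto (fun i => ‖b i‖) atTop (nhds 0) →
      (∀ m, φ (∑' i, (r m) ^ i • b i) = 0) → φ (b 0) = 0 := by
    intro b hb hbsum
    obtain ⟨M0, hM0⟩ := hb.bddAbove_range
    set M : ℝ := max M0 0 with hMdef
    have hM : ∀ i, ‖b i‖ ≤ M :=
      fun i => le_trans (hM0 (Set.mem_range_self i)) (le_max_left _ _)
    have hMnn : (0:ℝ) ≤ M := le_max_right _ _
    have hsummable : ∀ m, Summable (fun i => (r m) ^ i • b i) :=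
      fun m => summable_aux hsmul hna b hb (r m) (hr1 m)
    have hshiftsum : ∀ m, Summable (fun i => (r m) ^ (i + 1) • b (i + 1)) := by
      intro m
      have := (hsummable m).comp_injective (add_left_injective 1)
      simpa [Function.comp_def] using this
    have hdiff : ∀ m, (∑' i, (r m) ^ i • b i) - b 0 = ∑' i, (r m) ^ (i + 1) • b (i + 1) := by
      intro m
      rw [tsum_eq_zero_add' (hshiftsum m), pow_zero, one_smul, add_sub_cancel_left]
    have hnorm : ∀ m, ‖(∑' i, (r m) ^ i • b i) - b 0‖ ≤ ‖r m‖ * M := by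
      intro m
      rw [hdiff m]
      refine tsum_norm_le_aux hna (hshiftsum m) (by positivity) fun i => ?_
      calc ‖(r m) ^ (i + 1) • b (i + 1)‖ ≤ ‖(r m) ^ (i + 1)‖ * ‖b (i + 1)‖ := hsmul _ _
        _ = ‖r m‖ * (‖r m‖ ^ i * ‖b (i + 1)‖) := by rw [norm_pow]; ring
        _ ≤ ‖r m‖ * (1 * M) := by
            refine mul_le_mul_of_nonneg_left ?_ (norm_nonneg _)
            exact mul_le_mul (pow_le_one₀ (norm_nonneg _) (hr1 m)) (hM _)
              (norm_nonneg _) zero_le_one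
        _ = ‖r m‖ * M := by ring
    have htend : Tendsto (fun m => ∑' i, (r m) ^ i • b i) atTop (nhds (b 0)) := by
      rw [tendsto_iff_norm_sub_tendsto_zero]
      refine squeeze_zero (fun m => norm_nonneg _) hnorm ?_
      simpa using hr.mul_const M
    have hmem : b 0 ∈ RingHom.ker φ := by
      refine (hclosed (RingHom.ker φ)).mem_of_tendsto htend
        (Filter.Eventually.of_forall fun m => ?_)
      exact (RingHom.mem_ker).2 (hbsum m)
    exact (RingHom.mem_ker).1 hmem
  -- Step B: the hypotheses are preserved under shifting by one.
  have shift : ∀ b : ℕ → A, Tendsto (fun i => ‖b i‖) atTop (nhds 0) →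
      (∀ m, φ (∑' i, (r m) ^ i • b i) = 0) →
      ∀ m, φ (∑' i, (r m) ^ i • b (i + 1)) = 0 := by
    intro b hb hbsum m
    have hb0 : φ (b 0) = 0 := key b hb hbsum
    have hbshift : Tendsto (fun i => ‖b (i + 1)‖) atTop (nhds 0) := by
      have := hb.comp (tendsto_add_atTop_nat 1)
      simpa [Function.comp_def] using this
    have hs1 : Summable (fun i => (r m) ^ i • b (i + 1)) :=
      summable_aux hsmul hna (fun i => b (i + 1)) hbshift (r m) (hr1 m)
    have hshiftsum : Summable (fun i => (r m) ^ (i + 1) • b (i + 1)) := by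
      have := (summable_aux hsmul hna b hb (r m) (hr1 m)).comp_injective
        (add_left_injective 1)
      simpa [Function.comp_def] using this
    have hterm : ∀ i, (r m) ^ (i + 1) • b (i + 1)
        = algebraMap K A (r m) * ((r m) ^ i • b (i + 1)) := by
      intro i
      rw [pow_succ', mul_smul, Algebra.smul_def]
    have heq : (∑' i, (r m) ^ i • b i)
        = b 0 + algebraMap K A (r m) * ∑' i, (r m) ^ i • b (i + 1) := by
      rw [tsum_eq_zero_add' hshiftsum, pow_zero, one_smul]
      congr 1
      rw [← hs1.tsum_mul_left (algebraMap K A (r m))]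
      exact tsum_congr hterm
    have h0 := hbsum m
    rw [heq, map_add, map_mul, hb0, zero_add] at h0
    have hu : φ (algebraMap K A (r m)) * φ (algebraMap K A (r m)⁻¹) = 1 := by
      rw [← map_mul, ← map_mul, mul_inv_cancel₀ (hr0 m), map_one, map_one]
    calc φ (∑' i, (r m) ^ i • b (i + 1))
        = (φ (algebraMap K A (r m)) * φ (algebraMap K A (r m)⁻¹))
            * φ (∑' i, (r m) ^ i • b (i + 1)) := by rw [hu, one_mul]
      _ = φ (algebraMap K A (r m)⁻¹)
            * (φ (algebraMap K A (r m)) * φ (∑' i, (r m) ^ i • b (i + 1))) := by ring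
      _ = 0 := by rw [h0, mul_zero]
  -- Step C: every coefficient is in ker φ.
  have hshift_tend : ∀ k, Tendsto (fun i => ‖a (i + k)‖) atTop (nhds 0) := by
    intro k
    have := ha.comp (tendsto_add_atTop_nat k)
    simpa [Function.comp_def] using this
  have hmain : ∀ k, ∀ m, φ (∑' i, (r m) ^ i • a (i + k)) = 0 := by
    intro k
    induction k with
    | zero => simpa using hsum
    | succ k ih =>
      intro m
      have := shift (fun i => a (i + k)) (hshift_tend k) ih m
      have harr : ∀ i, i + 1 + k = i + (k + 1) := fun i => by ring
      simpa [harr] using this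
  have hak : ∀ k, a k ∈ RingHom.ker φ := by
    intro k
    refine (RingHom.mem_ker).2 ?_
    have := key (fun i => a (i + k)) (hshift_tend k) (hmain k)
    simpa using this
  -- Step D: conclude using Noetherianity.
  obtain ⟨S, hS⟩ := IsNoetherian.noetherian (RingHom.ker φ)
  have hex : ∀ b ∈ S, ∃ t : A, t ∈ 𝔭.primeCompl ∧ t * b = 0 := by
    intro b hb
    have hbQ : φ b = 0 := (RingHom.mem_ker).1 (hS ▸ Ideal.subset_span hb)
    obtain ⟨⟨t, ht⟩, htb⟩ := (IsLocalization.map_eq_zero_iff 𝔭.primeCompl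
      (Localization.AtPrime 𝔭) b).1 hbQ
    exact ⟨t, ht, htb⟩
  choose t ht htz using hex
  set s : A := ∏ b ∈ S.attach, t b b.2 with hsdef
  have hsmem : s ∈ 𝔭.primeCompl :=
    Submonoid.prod_mem _ fun b _ => ht b b.2
  have hgen : ∀ b ∈ S, s * b = 0 := by
    intro b hb
    have : s = t b hb * ∏ c ∈ S.attach.erase ⟨b, hb⟩, t c c.2 :=
      (Finset.mul_prod_erase S.attach (fun c => t c c.2) (Finset.mem_attach _ ⟨b, hb⟩)).symm
    rw [this, mul_comm (t b hb), mul_assoc, htz b hb, mul_zero]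
  have hle : RingHom.ker φ ≤ LinearMap.ker (LinearMap.mulLeft A s) := by
    rw [← hS, Submodule.span_le]
    intro b hb
    simp only [SetLike.mem_coe, LinearMap.mem_ker, LinearMap.mulLeft_apply]
    exact hgen b hb
  refine ⟨s, hsmem, fun i => ?_⟩
  have := hle (hak i)
  simpa using this
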